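/- Let p be a prime ≥ 5, F the free group on two generators, and n ≥ 2. Then G = F/λ_n(F) is a Beauville group. Explicitly, for n ≥ 3, if u, v denote the images of the free generators, then {u, v} and {uv², uv⁴} form a Beauville structure for G. -/

import Mathlib

/-- The subgroup generated by `m`-th powers of elements of `H`. -/
def pPow {G : Type*} [Group G] (H : Subgroup G) (m : ℕ) : Subgroup G :=
  Subgroup.closure {x : G | ∃ h ∈ H, x = h ^ m}

/-- The `p`-central series: `lam p 1 = ⊤` and `lam p (n+1) = [lam p n, G] ⊔ (lam p n)^p`.
    (We also set `lam p 0 = ⊤`.) -/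
def lam {G : Type*} [Group G] (p : ℕ) : ℕ → Subgroup G
  | 0 => ⊤
  | 1 => ⊤
  | (n+2) => ⁅(lam p (n+1) : Subgroup G), (⊤ : Subgroup G)⁆ ⊔ pPow (lam p (n+1)) p

theorem pPow_normal {G : Type*} [Group G] (H : Subgroup G) [hH : H.Normal] (m : ℕ) :
    (pPow H m).Normal := by
  have key : ∀ x ∈ pPow H m, ∀ g : G, g * x * g⁻¹ ∈ pPow H m := by
    intro x hx
    induction hx using Subgroup.closure_induction with
    | mem y hy =>
        intro g
        obtain ⟨h, hh, rfl⟩ := hy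
        refine Subgroup.subset_closure ⟨g * h * g⁻¹, hH.conj_mem h hh g, ?_⟩
        exact conj_pow.symm
    | one => intro g; simpa using (pPow H m).one_mem
    | mul x y hx hy ihx ihy =>
        intro g
        have h2 := mul_mem (ihx g) (ihy g)
        have : g * x * g⁻¹ * (g * y * g⁻¹) = g * (x * y) * g⁻¹ := by group
        rwa [this] at h2
    | inv x hx ihx =>
        intro g
        have h2 := inv_mem (ihx g)
        have : (g * x * g⁻¹)⁻¹ = g * x⁻¹ * g⁻¹ := by group
        rwa [this] at h2
  exact ⟨fun x hx g => key x hx g⟩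

theorem lam_normal' {G : Type*} [Group G] (p : ℕ) : ∀ n, (lam (G := G) p n).Normal
  | 0 => inferInstanceAs (⊤ : Subgroup G).Normal
  | 1 => inferInstanceAs (⊤ : Subgroup G).Normal
  | (n+2) => by
      haveI := lam_normal' (G := G) p (n+1)
      haveI := pPow_normal (lam (G := G) p (n+1)) p
      show (⁅(lam p (n+1) : Subgroup G), (⊤ : Subgroup G)⁆ ⊔ pPow (lam p (n+1)) p).Normal
      infer_instance

instance lam_normal {G : Type*} [Group G] (p n : ℕ) : (lam (G := G) p n).Normal :=
  lam_normal' p n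

/-- The union of all conjugates of the cyclic subgroup generated by `x`. -/
def conjClosure {G : Type*} [Group G] (x : G) : Set G :=
  ⋃ g : G, (fun h => g⁻¹ * h * g) '' (Subgroup.zpowers x : Set G)

/-- `Σ(x,y)`: the union of all conjugates of `⟨x⟩`, `⟨y⟩` and `⟨xy⟩`. -/
def SigmaSet {G : Type*} [Group G] (x y : G) : Set G :=
  conjClosure x ∪ conjClosure y ∪ conjClosure (x * y)

/-- `{x₁,y₁}` and `{x₂,y₂}` form a Beauville structure for `G`. -/
def IsBeauvilleStructure {G : Type*} [Group G] (x₁ y₁ x₂ y₂ : G) : Prop :=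
  Subgroup.closure {x₁, y₁} = ⊤ ∧ Subgroup.closure {x₂, y₂} = ⊤ ∧
    SigmaSet x₁ y₁ ∩ SigmaSet x₂ y₂ = {1}

/-- A Beauville group: a finite nontrivial (2-generated) group admitting a Beauville
structure. -/
def IsBeauvilleGroup (G : Type*) [Group G] : Prop :=
  Finite G ∧ Nontrivial G ∧ ∃ x₁ y₁ x₂ y₂ : G, IsBeauvilleStructure x₁ y₁ x₂ y₂
open scoped commutatorElement
section Aux

variable {G : Type*} [Group G] {H : Type*} [Group H] {p : ℕ}

lemma pPow_le {K : Subgroup G} {m : ℕ} : pPow K m ≤ K := by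
  rw [pPow, Subgroup.closure_le]
  rintro x ⟨h, hh, rfl⟩
  exact pow_mem hh m

lemma pPow_mono {K L : Subgroup G} (h : K ≤ L) (m : ℕ) : pPow K m ≤ pPow L m := by
  apply Subgroup.closure_mono
  rintro x ⟨k, hk, rfl⟩
  exact ⟨k, h hk, rfl⟩

lemma lam_succ_le (p : ℕ) : ∀ k, lam (G := G) p (k + 1) ≤ lam p k
  | 0 => le_top
  | 1 => le_top
  | (k + 2) => by
      show ⁅(lam p (k+2) : Subgroup G), (⊤ : Subgroup G)⁆ ⊔ pPow (lam p (k+2)) p ≤ lam p (k+2)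
      exact sup_le (Subgroup.commutator_le_left _ _) pPow_le

lemma lam_antitone (p : ℕ) {m k : ℕ} (h : m ≤ k) : lam (G := G) p k ≤ lam p m := by
  induction k with
  | zero => simpa using (Nat.le_zero.mp h) ▸ le_rfl
  | succ k ih =>
      rcases Nat.lt_or_ge m (k+1) with h' | h'
      · exact (lam_succ_le p k).trans (ih (Nat.lt_succ_iff.mp h'))
      · have : m = k + 1 := le_antisymm h h'
        subst this; exact le_rfl

lemma pow_p_pow_mem_lam (p : ℕ) (x : G) : ∀ k, x ^ (p ^ k) ∈ lam (G := G) p (k + 1)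
  | 0 => by simp only [pow_zero, pow_one]; exact Subgroup.mem_top x
  | (k + 1) => by
      have h := pow_p_pow_mem_lam p x k
      have : x ^ p ^ (k + 1) = (x ^ p ^ k) ^ p := by rw [← pow_mul, pow_succ]
      rw [this]
      have hm : (x ^ p ^ k) ^ p ∈ pPow (lam (G := G) p (k+1)) p :=
        Subgroup.subset_closure ⟨_, h, rfl⟩
      exact Subgroup.mem_sup_right hm

lemma map_pPow (f : G →* H) (K : Subgroup G) (m : ℕ) :
    (pPow K m).map f = pPow (K.map f) m := by
  rw [pPow, pPow, MonoidHom.map_closure]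
  congr 1
  ext x
  constructor
  · rintro ⟨y, ⟨h, hh, rfl⟩, rfl⟩
    exact ⟨f h, ⟨h, hh, rfl⟩, map_pow f h m⟩
  · rintro ⟨y, ⟨h, hh, rfl⟩, rfl⟩
    exact ⟨h ^ m, ⟨h, hh, rfl⟩, map_pow f h m⟩

lemma lam_map_le (f : G →* H) (p : ℕ) : ∀ k, (lam p k).map f ≤ lam p k
  | 0 => le_top
  | 1 => le_top
  | (k + 2) => by
      show Subgroup.map f (⁅(lam p (k+1) : Subgroup G), ⊤⁆ ⊔ pPow (lam p (k+1)) p) ≤ _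
      rw [Subgroup.map_sup, Subgroup.map_commutator, map_pPow]
      apply sup_le
      · calc ⁅Subgroup.map f (lam p (k+1)), Subgroup.map f ⊤⁆
            ≤ ⁅(lam p (k+1) : Subgroup H), (⊤ : Subgroup H)⁆ :=
              Subgroup.commutator_mono (lam_map_le f p (k+1)) le_top
          _ ≤ lam p (k+2) := le_sup_left
      · calc pPow (Subgroup.map f (lam p (k+1))) p ≤ pPow (lam p (k+1)) p :=
              pPow_mono (lam_map_le f p (k+1)) p
          _ ≤ lam p (k+2) := le_sup_right

lemma mem_lam_map {f : G →* H} {p k : ℕ} {x : G} (hx : x ∈ lam p k) : f x ∈ lam p k :=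
  lam_map_le f p k ⟨x, hx, rfl⟩

end Aux
section AuxComm

variable {A : Type*} [CommGroup A]

lemma lam_comm_le (p : ℕ) : ∀ k, lam (G := A) p (k + 1) ≤
    (⊤ : Subgroup A).map (powMonoidHom (p ^ k))
  | 0 => by
      intro x _
      exact ⟨x, Subgroup.mem_top x, by simp [powMonoidHom]⟩
  | (k + 1) => by
      show ⁅(lam p (k+1) : Subgroup A), ⊤⁆ ⊔ pPow (lam p (k+1)) p ≤ _
      apply sup_le
      · rw [Subgroup.commutator_le]
        intro g₁ _ g₂ _
        have : ⁅g₁, g₂⁆ = 1 := by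
          rw [commutatorElement_def, mul_comm g₁ g₂]
          group
        rw [this]; exact Subgroup.one_mem _
      · rw [pPow, Subgroup.closure_le]
        rintro x ⟨h, hh, rfl⟩
        obtain ⟨y, -, hy⟩ := lam_comm_le p k hh
        refine ⟨y, Subgroup.mem_top y, ?_⟩
        simp only [powMonoidHom_apply] at hy ⊢
        rw [pow_succ, pow_mul, hy]

lemma lam_zmod_eq_bot (p k : ℕ) :
    lam (G := Multiplicative (ZMod (p ^ k))) p (k + 1) = ⊥ := by
  apply le_bot_iff.mp
  intro x hx
  obtain ⟨y, -, hy⟩ := lam_comm_le p k hx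
  simp only [powMonoidHom_apply] at hy
  have : y ^ (p ^ k) = 1 := by
    have h0 : ((p ^ k : ℕ) : ZMod (p ^ k)) = 0 := ZMod.natCast_self _
    have : (p ^ k) • (Multiplicative.toAdd y) = 0 := by
      rw [nsmul_eq_mul, h0, zero_mul]
    have h2 : Multiplicative.toAdd (y ^ (p ^ k)) = 0 := by
      rw [toAdd_pow]; exact this
    exact Multiplicative.toAdd.injective (by simp only [toAdd_one]; exact h2)
  rw [← hy, this]
  exact Subgroup.mem_bot.mpr rfl

end AuxComm
/-- Abelianization map to `ℤ × ℤ`. -/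
def Aab : FreeGroup (Fin 2) →* Multiplicative (ℤ × ℤ) :=
  FreeGroup.lift (fun i => Multiplicative.ofAdd (if i = 0 then ((1 : ℤ), (0 : ℤ)) else (0, 1)))

lemma Aab_of0 : Aab (FreeGroup.of 0) = Multiplicative.ofAdd ((1 : ℤ), (0 : ℤ)) := by
  simp [Aab]

lemma Aab_of1 : Aab (FreeGroup.of 1) = Multiplicative.ofAdd ((0 : ℤ), (1 : ℤ)) := by
  simp [Aab]

/-- A linear functional `(ℤ × ℤ) → ZMod m`, multiplicatively. -/
def chi (m : ℕ) (α β : ℤ) : Multiplicative (ℤ × ℤ) →* Multiplicative (ZMod m) :=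
  AddMonoidHom.toMultiplicative
    { toFun := fun q => ((α * q.1 + β * q.2 : ℤ) : ZMod m)
      map_zero' := by simp
      map_add' := by
        intro q r
        simp only [Prod.fst_add, Prod.snd_add]
        push_cast
        ring }

lemma chi_apply (m : ℕ) (α β a b : ℤ) :
    chi m α β (Multiplicative.ofAdd (a, b)) =
      Multiplicative.ofAdd ((α * a + β * b : ℤ) : ZMod m) := rfl

lemma lam_int_dvd (p k : ℕ) (x y : FreeGroup (Fin 2)) (a b c d α β : ℤ) (i j : ℤ)
    (hx : Aab x = Multiplicative.ofAdd (a, b)) (hy : Aab y = Multiplicative.ofAdd (c, d))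
    (hmem : x ^ i * (y ^ j)⁻¹ ∈ lam p (k + 1)) :
    ((p : ℤ) ^ k) ∣ (i * (α * a + β * b) - j * (α * c + β * d)) := by
  have hmap := mem_lam_map (f := (chi (p ^ k) α β).comp Aab) hmem
  rw [lam_zmod_eq_bot p k, Subgroup.mem_bot] at hmap
  have hval : ((chi (p ^ k) α β).comp Aab) (x ^ i * (y ^ j)⁻¹) =
      Multiplicative.ofAdd ((i * (α * a + β * b) - j * (α * c + β * d) : ℤ) : ZMod (p ^ k)) := by
    rw [map_mul, map_inv, map_zpow, map_zpow, MonoidHom.comp_apply, MonoidHom.comp_apply,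
      hx, hy, chi_apply, chi_apply]
    apply Multiplicative.toAdd.injective
    simp only [toAdd_mul, toAdd_inv, toAdd_zpow, toAdd_ofAdd, zsmul_eq_mul]
    push_cast
    ring
  rw [hval] at hmap
  have h0 : ((i * (α * a + β * b) - j * (α * c + β * d) : ℤ) : ZMod (p ^ k)) = 0 := by
    have := congrArg Multiplicative.toAdd hmap
    simpa using this
  have := (ZMod.intCast_zmod_eq_zero_iff_dvd _ (p ^ k)).mp h0
  simpa using this

lemma exists_padic (p : ℕ) (hp : 2 ≤ p) :
    ∀ (i : ℤ), i ≠ 0 → ∃ s : ℕ, ∃ i' : ℤ, ¬ ((p : ℤ) ∣ i') ∧ i = (p : ℤ) ^ s * i' := by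
  suffices H : ∀ m : ℕ, ∀ i : ℤ, i.natAbs = m → i ≠ 0 →
      ∃ s : ℕ, ∃ i' : ℤ, ¬ ((p : ℤ) ∣ i') ∧ i = (p : ℤ) ^ s * i' by
    intro i hi; exact H i.natAbs i rfl hi
  intro m
  induction m using Nat.strong_induction_on with
  | _ m ih =>
    intro i hm hi
    by_cases h : (p : ℤ) ∣ i
    · obtain ⟨j, rfl⟩ := h
      have hj : j ≠ 0 := by rintro rfl; simp at hi
      have hlt : j.natAbs < m := by
        rw [← hm, Int.natAbs_mul]
        have h1 : 0 < j.natAbs := Int.natAbs_pos.mpr hj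
        have h2 : 2 ≤ (p : ℤ).natAbs := by simpa using hp
        nlinarith
      obtain ⟨s, i', h1, h2⟩ := ih j.natAbs hlt j rfl hj
      exact ⟨s + 1, i', h1, by rw [h2]; ring⟩
    · exact ⟨0, i, h, by simp⟩
lemma dvd_cancel_pow {p : ℕ} (hp : p.Prime) (s : ℕ) {w : ℤ}
    (hw : (p : ℤ) ^ (s + 1) ∣ (p : ℤ) ^ s * w) : (p : ℤ) ∣ w := by
  rw [pow_succ] at hw
  have hne : ((p : ℤ) ^ s) ≠ 0 := pow_ne_zero s (by exact_mod_cast hp.ne_zero)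
  exact (mul_dvd_mul_iff_left hne).mp hw

lemma zpow_decomp (x : FreeGroup (Fin 2)) (p m : ℕ) (z : ℤ) :
    x ^ ((p : ℤ) ^ m * z) = (x ^ (p ^ m : ℕ)) ^ z := by
  rw [← zpow_natCast x (p ^ m : ℕ), ← zpow_mul]
  push_cast
  ring_nf

lemma side_lemma (p n : ℕ) (hp : p.Prime) (hn : 2 ≤ n) (x c₀ : FreeGroup (Fin 2))
    (i a b : ℤ) (hx : Aab x = Multiplicative.ofAdd (a, b))
    (hab : ¬ ((p : ℤ) ∣ a) ∨ ¬ ((p : ℤ) ∣ b)) :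
    ((QuotientGroup.mk (c₀⁻¹ * x ^ i * c₀) : FreeGroup (Fin 2) ⧸ lam p n) = 1) ∨
    ∃ s : ℕ, s + 2 ≤ n ∧ ∃ i' : ℤ, ¬ ((p : ℤ) ∣ i') ∧ i = (p : ℤ) ^ s * i' ∧
      c₀⁻¹ * x ^ i * c₀ ∈ lam p (s + 1) ∧ x ^ i ∉ lam p (s + 2) := by
  by_cases hi : i = 0
  · left
    subst hi
    rw [QuotientGroup.eq_one_iff]
    simpa using (lam p n).one_mem
  obtain ⟨s, i', hi', heq⟩ := exists_padic p hp.two_le i hi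
  by_cases hsn : n ≤ s + 1
  · -- then x ^ i ∈ lam p n, so the class is 1
    left
    have h1 : n - 1 ≤ s := by omega
    have hxp : x ^ (p ^ (n - 1) : ℕ) ∈ lam (G := FreeGroup (Fin 2)) p n := by
      have := pow_p_pow_mem_lam p x (n - 1)
      have hn1 : n - 1 + 1 = n := by omega
      rwa [hn1] at this
    have hxi : x ^ i ∈ lam (G := FreeGroup (Fin 2)) p n := by
      have : x ^ i = (x ^ (p ^ (n - 1) : ℕ)) ^ ((p : ℤ) ^ (s - (n - 1)) * i') := by
        rw [← zpow_decomp x p (n - 1), heq, ← mul_assoc, ← pow_add]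
        congr 1
        have hns : (n - 1) + (s - (n - 1)) = s := by omega
        rw [hns]
      rw [this]
      exact Subgroup.zpow_mem _ hxp _
    rw [QuotientGroup.eq_one_iff]
    have := (lam_normal p n).conj_mem _ hxi c₀⁻¹
    simpa [mul_assoc] using this
  · right
    refine ⟨s, by omega, i', hi', heq, ?_, ?_⟩
    · have hxi : x ^ i ∈ lam (G := FreeGroup (Fin 2)) p (s + 1) := by
        rw [heq, zpow_decomp]
        exact Subgroup.zpow_mem _ (pow_p_pow_mem_lam p x s) _
      have := (lam_normal p (s + 1)).conj_mem _ hxi c₀⁻¹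
      simpa [mul_assoc] using this
    · intro hmem
      have hmem' : x ^ i * (x ^ (0 : ℤ))⁻¹ ∈ lam (G := FreeGroup (Fin 2)) p ((s + 1) + 1) := by
        simpa using hmem
      have hpInt : Prime (p : ℤ) := Nat.prime_iff_prime_int.mp hp
      rcases hab with hA | hB
      · have hdvd := lam_int_dvd p (s + 1) x x a b a b 1 0 i 0 hx hx hmem'
        simp only [zero_mul, sub_zero, one_mul, mul_zero, add_zero] at hdvd
        -- hdvd : (p:ℤ)^(s+1) ∣ i * a
        rw [heq] at hdvd
        have : (p : ℤ) ∣ i' * a := dvd_cancel_pow hp s (by rwa [mul_assoc] at hdvd)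
        rcases hpInt.dvd_mul.mp this with h | h
        · exact hi' h
        · exact hA h
      · have hdvd := lam_int_dvd p (s + 1) x x a b a b 0 1 i 0 hx hx hmem'
        simp only [zero_mul, sub_zero, one_mul, mul_zero, zero_add, add_zero] at hdvd
        rw [heq] at hdvd
        have : (p : ℤ) ∣ i' * b := dvd_cancel_pow hp s (by rwa [mul_assoc] at hdvd)
        rcases hpInt.dvd_mul.mp this with h | h
        · exact hi' h
        · exact hB h
lemma key_disjoint (p n : ℕ) (hp : p.Prime) (hn : 2 ≤ n)
    (x y : FreeGroup (Fin 2)) (a b c d : ℤ)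
    (hx : Aab x = Multiplicative.ofAdd (a, b)) (hy : Aab y = Multiplicative.ofAdd (c, d))
    (hdet : ¬ ((p : ℤ) ∣ (a * d - b * c)))
    (g : FreeGroup (Fin 2) ⧸ lam p n)
    (hg1 : g ∈ conjClosure ((QuotientGroup.mk x : FreeGroup (Fin 2) ⧸ lam p n)))
    (hg2 : g ∈ conjClosure ((QuotientGroup.mk y : FreeGroup (Fin 2) ⧸ lam p n))) :
    g = 1 := by
  have hpInt : Prime (p : ℤ) := Nat.prime_iff_prime_int.mp hp
  have hab : ¬ ((p : ℤ) ∣ a) ∨ ¬ ((p : ℤ) ∣ b) := by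
    by_contra h
    push_neg at h
    exact hdet (dvd_sub (Dvd.dvd.mul_right h.1 d) (Dvd.dvd.mul_right h.2 c))
  have hcd : ¬ ((p : ℤ) ∣ c) ∨ ¬ ((p : ℤ) ∣ d) := by
    by_contra h
    push_neg at h
    exact hdet (dvd_sub (Dvd.dvd.mul_left h.2 a) (Dvd.dvd.mul_left h.1 b))
  rw [conjClosure, Set.mem_iUnion] at hg1 hg2
  obtain ⟨c1, h1, hh1, hgeq1⟩ := hg1
  obtain ⟨c2, h2, hh2, hgeq2⟩ := hg2
  rw [SetLike.mem_coe, Subgroup.mem_zpowers_iff] at hh1 hh2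
  obtain ⟨i, rfl⟩ := hh1
  obtain ⟨j, rfl⟩ := hh2
  obtain ⟨c₀, rfl⟩ := QuotientGroup.mk_surjective c1
  obtain ⟨d₀, rfl⟩ := QuotientGroup.mk_surjective c2
  simp only at hgeq1 hgeq2
  have e1 : (QuotientGroup.mk (c₀⁻¹ * x ^ i * c₀) : FreeGroup (Fin 2) ⧸ lam p n) = g := by
    rw [← hgeq1, QuotientGroup.mk_mul, QuotientGroup.mk_mul, QuotientGroup.mk_inv,
      QuotientGroup.mk_zpow]
  have e2 : (QuotientGroup.mk (d₀⁻¹ * y ^ j * d₀) : FreeGroup (Fin 2) ⧸ lam p n) = g := by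
    rw [← hgeq2, QuotientGroup.mk_mul, QuotientGroup.mk_mul, QuotientGroup.mk_inv,
      QuotientGroup.mk_zpow]
  rcases side_lemma p n hp hn x c₀ i a b hx hab with h1 | ⟨s, hs, i', hi', hieq, hw1, hw2⟩
  · rw [← e1]; exact h1
  rcases side_lemma p n hp hn y d₀ j c d hy hcd with h2 | ⟨t, ht, j', hj', hjeq, hw1', hw2'⟩
  · rw [← e2]; exact h2
  exfalso
  set w : FreeGroup (Fin 2) := c₀⁻¹ * x ^ i * c₀ with hw
  set w' : FreeGroup (Fin 2) := d₀⁻¹ * y ^ j * d₀ with hw'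
  have hww' : w⁻¹ * w' ∈ lam (G := FreeGroup (Fin 2)) p n := by
    rw [← QuotientGroup.eq_one_iff, QuotientGroup.mk_mul, QuotientGroup.mk_inv, e1, e2]
    group
  -- first, s = t
  have hst : s = t := by
    by_contra hne
    rcases Nat.lt_or_ge s t with hlt | hge
    · -- w' ∈ lam (s+2), w⁻¹w' ∈ lam n ≤ lam (s+2), so w ∈ lam (s+2), so x^i ∈ lam (s+2)
      have hw'mem : w' ∈ lam (G := FreeGroup (Fin 2)) p (s + 2) :=
        lam_antitone p (by omega : s + 2 ≤ t + 1) hw1'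
      have hwmem : w ∈ lam (G := FreeGroup (Fin 2)) p (s + 2) := by
        have h3 : w = w' * (w⁻¹ * w')⁻¹ := by group
        rw [h3]
        exact Subgroup.mul_mem _ hw'mem (Subgroup.inv_mem _ (lam_antitone p hs hww'))
      have : x ^ i ∈ lam (G := FreeGroup (Fin 2)) p (s + 2) := by
        have := (lam_normal p (s + 2)).conj_mem _ hwmem c₀
        rw [hw] at this
        have h4 : c₀ * (c₀⁻¹ * x ^ i * c₀) * c₀⁻¹ = x ^ i := by group
        rwa [h4] at this
      exact hw2 this
    · have hlt : t < s := by omega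
      have hwmem : w ∈ lam (G := FreeGroup (Fin 2)) p (t + 2) :=
        lam_antitone p (by omega : t + 2 ≤ s + 1) hw1
      have hw'mem : w' ∈ lam (G := FreeGroup (Fin 2)) p (t + 2) := by
        have h3 : w' = w * (w⁻¹ * w') := by group
        rw [h3]
        exact Subgroup.mul_mem _ hwmem (lam_antitone p ht hww')
      have : y ^ j ∈ lam (G := FreeGroup (Fin 2)) p (t + 2) := by
        have := (lam_normal p (t + 2)).conj_mem _ hw'mem d₀
        rw [hw'] at this
        have h4 : d₀ * (d₀⁻¹ * y ^ j * d₀) * d₀⁻¹ = y ^ j := by group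
        rwa [h4] at this
      exact hw2' this
  subst hst
  -- now x^i * (y^j)⁻¹ ∈ lam p (s+2)
  have hxiyj : x ^ i * (y ^ j)⁻¹ ∈ lam (G := FreeGroup (Fin 2)) p (s + 2) := by
    have hA : x ^ i * w⁻¹ ∈ lam (G := FreeGroup (Fin 2)) p (s + 2) := by
      have hcomm : x ^ i * w⁻¹ = ⁅x ^ i, c₀⁻¹⁆ := by rw [hw]; group
      rw [hcomm]
      have hxi : x ^ i ∈ lam (G := FreeGroup (Fin 2)) p (s + 1) := by
        rw [hieq, zpow_decomp]
        exact Subgroup.zpow_mem _ (pow_p_pow_mem_lam p x s) _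
      have : ⁅x ^ i, c₀⁻¹⁆ ∈ ⁅(lam (G := FreeGroup (Fin 2)) p (s + 1) : Subgroup _), (⊤ : Subgroup (FreeGroup (Fin 2)))⁆ :=
        Subgroup.commutator_mem_commutator hxi (Subgroup.mem_top _)
      have hle : ⁅(lam (G := FreeGroup (Fin 2)) p (s + 1) : Subgroup _), (⊤ : Subgroup (FreeGroup (Fin 2)))⁆ ≤ lam p (s + 2) := le_sup_left
      exact hle this
    have hB : y ^ j * w'⁻¹ ∈ lam (G := FreeGroup (Fin 2)) p (s + 2) := by
      have hcomm : y ^ j * w'⁻¹ = ⁅y ^ j, d₀⁻¹⁆ := by rw [hw']; group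
      rw [hcomm]
      have hyj : y ^ j ∈ lam (G := FreeGroup (Fin 2)) p (s + 1) := by
        rw [hjeq, zpow_decomp]
        exact Subgroup.zpow_mem _ (pow_p_pow_mem_lam p y s) _
      have : ⁅y ^ j, d₀⁻¹⁆ ∈ ⁅(lam (G := FreeGroup (Fin 2)) p (s + 1) : Subgroup _), (⊤ : Subgroup (FreeGroup (Fin 2)))⁆ :=
        Subgroup.commutator_mem_commutator hyj (Subgroup.mem_top _)
      have hle : ⁅(lam (G := FreeGroup (Fin 2)) p (s + 1) : Subgroup _), (⊤ : Subgroup (FreeGroup (Fin 2)))⁆ ≤ lam p (s + 2) := le_sup_left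
      exact hle this
    have hC : w * w'⁻¹ ∈ lam (G := FreeGroup (Fin 2)) p (s + 2) := by
      have h3 : w * w'⁻¹ = w * (w⁻¹ * w')⁻¹ * w⁻¹ := by group
      rw [h3]
      have hmem : (w⁻¹ * w')⁻¹ ∈ lam (G := FreeGroup (Fin 2)) p (s + 2) :=
        Subgroup.inv_mem _ (lam_antitone p hs hww')
      exact (lam_normal p (s + 2)).conj_mem _ hmem w
    have hfin := Subgroup.mul_mem _ (Subgroup.mul_mem _ hA hC) (Subgroup.inv_mem _ hB)
    have h4 : x ^ i * w⁻¹ * (w * w'⁻¹) * (y ^ j * w'⁻¹)⁻¹ = x ^ i * (y ^ j)⁻¹ := by group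
    rwa [h4] at hfin
  have d1 := lam_int_dvd p (s + 1) x y a b c d 1 0 i j hx hy hxiyj
  have d2 := lam_int_dvd p (s + 1) x y a b c d 0 1 i j hx hy hxiyj
  simp only [one_mul, zero_mul, add_zero, zero_add, mul_zero] at d1 d2
  rw [hieq, hjeq] at d1 d2
  have d1' : (p : ℤ) ∣ i' * a - j' * c := by
    apply dvd_cancel_pow hp s
    have h5 : (p : ℤ) ^ s * (i' * a - j' * c) = (p : ℤ) ^ s * i' * a - (p : ℤ) ^ s * j' * c := by
      ring
    rw [h5]
    exact d1
  have d2' : (p : ℤ) ∣ i' * b - j' * d := by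
    apply dvd_cancel_pow hp s
    have h5 : (p : ℤ) ^ s * (i' * b - j' * d) = (p : ℤ) ^ s * i' * b - (p : ℤ) ^ s * j' * d := by
      ring
    rw [h5]
    exact d2
  have hfinal : (p : ℤ) ∣ i' * (j' * (a * d - b * c)) := by
    have h5 : i' * (j' * (a * d - b * c)) =
        j' * d * (i' * a - j' * c) - j' * c * (i' * b - j' * d) := by ring
    rw [h5]
    exact dvd_sub (Dvd.dvd.mul_left d1' _) (Dvd.dvd.mul_left d2' _)
  rcases hpInt.dvd_mul.mp hfinal with h | h
  · exact hi' h
  rcases hpInt.dvd_mul.mp h with h | h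
  · exact hj' h
  · exact hdet h
instance : Group.FG (FreeGroup (Fin 2)) :=
  Group.fg_iff.mpr ⟨Set.range FreeGroup.of, FreeGroup.closure_range_of _, Set.finite_range _⟩

lemma lam_quot_finite (p : ℕ) (hp : p.Prime) :
    ∀ n, Finite (FreeGroup (Fin 2) ⧸ lam p n)
  | 0 => by
      exact @Finite.of_subsingleton _ (QuotientGroup.subsingleton_quotient_top (G := FreeGroup (Fin 2)))
  | 1 => by
      exact @Finite.of_subsingleton _ (QuotientGroup.subsingleton_quotient_top (G := FreeGroup (Fin 2)))
  | (n + 2) => by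
      haveI ihf : Finite (FreeGroup (Fin 2) ⧸ lam p (n + 1)) := lam_quot_finite p hp (n + 1)
      set FF := FreeGroup (Fin 2)
      set N : Subgroup FF := lam p (n + 2) with hN
      set M : Subgroup FF := lam p (n + 1) with hM
      have hNM : N ≤ M := lam_succ_le p (n + 1)
      set H : Subgroup (FF ⧸ N) := M.map (QuotientGroup.mk' N) with hH
      have iso := QuotientGroup.quotientQuotientEquivQuotient N M hNM
      haveI : Finite ((FF ⧸ N) ⧸ H) := Finite.of_equiv _ iso.toEquiv.symm
      haveI : H.FiniteIndex := H.finiteIndex_of_finite_quotient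
      have hFG : Group.FG ↥H := H.fg_of_index_ne_zero
      -- H is commutative
      have hcomm : ∀ g1 g2 : ↥H, g1 * g2 = g2 * g1 := by
        rintro ⟨g1, hg1⟩ ⟨g2, hg2⟩
        obtain ⟨w1, hw1, rfl⟩ := hg1
        obtain ⟨w2, hw2, rfl⟩ := hg2
        apply Subtype.ext
        show (QuotientGroup.mk' N) w1 * (QuotientGroup.mk' N) w2 =
          (QuotientGroup.mk' N) w2 * (QuotientGroup.mk' N) w1
        rw [← map_mul, ← map_mul]
        apply (QuotientGroup.mk'_eq_mk' N).mpr
        refine ⟨⁅w2⁻¹, w1⁻¹⁆, ?_, (by intro K _ a b; rw [commutatorElement_def]; group :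
          ∀ {K : Type} [Group K] (a b : K), a * b * ⁅b⁻¹, a⁻¹⁆ = b * a) w1 w2⟩
        have : ⁅w2⁻¹, w1⁻¹⁆ ∈ ⁅(M : Subgroup FF), (⊤ : Subgroup FF)⁆ :=
          Subgroup.commutator_mem_commutator (M.inv_mem hw2) (Subgroup.mem_top _)
        exact Subgroup.mem_sup_left this
      letI instCG : CommGroup ↥H :=
        { H.toGroup with mul_comm := hcomm }
      have htor : Monoid.IsTorsion ↥H := by
        intro h
        refine isOfFinOrder_iff_pow_eq_one.mpr ⟨p, hp.pos, ?_⟩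
        obtain ⟨g, hg⟩ := h
        obtain ⟨w, hw, rfl⟩ := hg
        apply Subtype.ext
        show (QuotientGroup.mk' N w) ^ p = 1
        rw [← map_pow]
        apply (QuotientGroup.eq_one_iff _).mpr
        exact Subgroup.mem_sup_right (Subgroup.subset_closure ⟨w, hw, rfl⟩)
      haveI : Finite ↥H := @CommGroup.finite_of_fg_torsion ↥H instCG hFG htor
      exact Finite.of_equiv _ (Subgroup.groupEquivQuotientProdSubgroup (s := H)).symm
lemma one_mem_conjClosure {G : Type*} [Group G] (x : G) : 1 ∈ conjClosure x := by
  rw [conjClosure, Set.mem_iUnion]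
  exact ⟨1, 1, by simpa using Subgroup.one_mem _, by simp⟩

lemma one_mem_SigmaSet {G : Type*} [Group G] (x y : G) : 1 ∈ SigmaSet x y :=
  Or.inl (Or.inl (one_mem_conjClosure x))

lemma Aab_word (k : ℕ) :
    Aab (FreeGroup.of 0 * FreeGroup.of 1 ^ k) = Multiplicative.ofAdd ((1 : ℤ), (k : ℤ)) := by
  rw [map_mul, map_pow, Aab_of0, Aab_of1]
  apply Multiplicative.toAdd.injective
  simp only [toAdd_mul, toAdd_pow, toAdd_ofAdd]
  rw [Prod.ext_iff]
  constructor <;> simp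

lemma Aab_uv :
    Aab (FreeGroup.of 0 * FreeGroup.of 1) = Multiplicative.ofAdd ((1 : ℤ), (1 : ℤ)) := by
  rw [map_mul, Aab_of0, Aab_of1]
  apply Multiplicative.toAdd.injective
  simp only [toAdd_mul, toAdd_ofAdd]
  rw [Prod.ext_iff]
  constructor <;> simp

lemma Aab_xy2 :
    Aab (FreeGroup.of 0 * FreeGroup.of 1 ^ 2 * (FreeGroup.of 0 * FreeGroup.of 1 ^ 4)) =
      Multiplicative.ofAdd ((2 : ℤ), (6 : ℤ)) := by
  rw [map_mul, Aab_word 2, Aab_word 4]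
  apply Multiplicative.toAdd.injective
  simp only [toAdd_mul, toAdd_ofAdd]
  rw [Prod.ext_iff]
  constructor <;> simp

/-- For `p ≥ 5` and `n ≥ 2`, `G = F/λ_n(F)` (`F` free of rank 2) is a Beauville group;
explicitly, for `n ≥ 3`, if `u, v` are the images of the free generators then
`{u, v}` and `{uv², uv⁴}` form a Beauville structure for `G`. -/
theorem statement_6 (p n : ℕ) (hp : p.Prime) (hp5 : 5 ≤ p) (hn : 2 ≤ n) :
    IsBeauvilleGroup (FreeGroup (Fin 2) ⧸ lam p n) ∧
    (3 ≤ n →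
      let u : FreeGroup (Fin 2) ⧸ lam p n := QuotientGroup.mk (FreeGroup.of 0)
      let v : FreeGroup (Fin 2) ⧸ lam p n := QuotientGroup.mk (FreeGroup.of 1)
      IsBeauvilleStructure u v (u * v ^ 2) (u * v ^ 4)) := by
  have hpInt : Prime (p : ℤ) := Nat.prime_iff_prime_int.mp hp
  have hp5' : (5 : ℤ) ≤ (p : ℤ) := by exact_mod_cast hp5
  set Q := FreeGroup (Fin 2) ⧸ lam p n with hQ
  set u : Q := QuotientGroup.mk (FreeGroup.of 0) with hu
  set v : Q := QuotientGroup.mk (FreeGroup.of 1) with hv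
  -- small non-divisibility facts
  have notp : ∀ D : ℤ, (D = 1 ∨ D = -1 ∨ D = 2 ∨ D = -2 ∨ D = 3 ∨ D = 4 ∨ D = 6) →
      ¬ ((p : ℤ) ∣ D) := by
    rintro D (rfl | rfl | rfl | rfl | rfl | rfl | rfl) h
    · exact hpInt.not_dvd_one h
    · exact hpInt.not_dvd_one ((dvd_neg).mp h)
    · have := Int.le_of_dvd (by norm_num) h; omega
    · have := Int.le_of_dvd (by norm_num) ((dvd_neg).mp h); omega
    · have := Int.le_of_dvd (by norm_num) h; omega
    · rcases hpInt.dvd_mul.mp (show (p : ℤ) ∣ 2 * 2 by norm_num; exact h) with h2 | h2 <;>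
        (have := Int.le_of_dvd (by norm_num) h2; omega)
    · rcases hpInt.dvd_mul.mp (show (p : ℤ) ∣ 2 * 3 by norm_num; exact h) with h2 | h2 <;>
        (have := Int.le_of_dvd (by norm_num) h2; omega)
  -- rewriting products as classes
  have e_uv : (QuotientGroup.mk (FreeGroup.of 0 * FreeGroup.of 1) : Q) = u * v := by
    rw [QuotientGroup.mk_mul]
  have e_x2 : (QuotientGroup.mk (FreeGroup.of 0 * FreeGroup.of 1 ^ 2) : Q) = u * v ^ 2 := by
    rw [QuotientGroup.mk_mul, QuotientGroup.mk_pow]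
  have e_y2 : (QuotientGroup.mk (FreeGroup.of 0 * FreeGroup.of 1 ^ 4) : Q) = u * v ^ 4 := by
    rw [QuotientGroup.mk_mul, QuotientGroup.mk_pow]
  have e_xy2 : (QuotientGroup.mk (FreeGroup.of 0 * FreeGroup.of 1 ^ 2 *
      (FreeGroup.of 0 * FreeGroup.of 1 ^ 4)) : Q) = (u * v ^ 2) * (u * v ^ 4) := by
    rw [QuotientGroup.mk_mul, e_x2, e_y2]
  -- the Sigma-set intersection
  have hSigma : SigmaSet u v ∩ SigmaSet (u * v ^ 2) (u * v ^ 4) = {1} := by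
    apply Set.eq_singleton_iff_unique_mem.mpr
    refine ⟨⟨one_mem_SigmaSet _ _, one_mem_SigmaSet _ _⟩, ?_⟩
    rintro g ⟨hg1, hg2⟩
    rw [SigmaSet, ← e_uv] at hg1
    rw [SigmaSet, ← e_xy2, ← e_x2, ← e_y2] at hg2
    rw [hu] at hg1
    rw [hv] at hg1
    rcases hg1 with (h | h) | h <;> rcases hg2 with (h' | h') | h'
    · exact key_disjoint p n hp hn _ _ 1 0 1 2 Aab_of0 (Aab_word 2)
        (notp _ (by norm_num)) g h h'
    · exact key_disjoint p n hp hn _ _ 1 0 1 4 Aab_of0 (Aab_word 4)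
        (notp _ (by norm_num)) g h h'
    · exact key_disjoint p n hp hn _ _ 1 0 2 6 Aab_of0 Aab_xy2
        (notp _ (by norm_num)) g h h'
    · exact key_disjoint p n hp hn _ _ 0 1 1 2 Aab_of1 (Aab_word 2)
        (notp _ (by norm_num)) g h h'
    · exact key_disjoint p n hp hn _ _ 0 1 1 4 Aab_of1 (Aab_word 4)
        (notp _ (by norm_num)) g h h'
    · exact key_disjoint p n hp hn _ _ 0 1 2 6 Aab_of1 Aab_xy2
        (notp _ (by norm_num)) g h h'
    · exact key_disjoint p n hp hn _ _ 1 1 1 2 Aab_uv (Aab_word 2)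
        (notp _ (by norm_num)) g h h'
    · exact key_disjoint p n hp hn _ _ 1 1 1 4 Aab_uv (Aab_word 4)
        (notp _ (by norm_num)) g h h'
    · exact key_disjoint p n hp hn _ _ 1 1 2 6 Aab_uv Aab_xy2
        (notp _ (by norm_num)) g h h'
  -- generation by {u, v}
  have hgen1 : Subgroup.closure ({u, v} : Set Q) = ⊤ := by
    have himg : ({u, v} : Set Q) =
        (QuotientGroup.mk' (lam p n)) '' {FreeGroup.of 0, FreeGroup.of 1} := by
      rw [Set.image_insert_eq, Set.image_singleton]
      rfl
    have hcl : Subgroup.closure ({FreeGroup.of 0, FreeGroup.of 1} :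
        Set (FreeGroup (Fin 2))) = ⊤ := by
      have hrange : ({FreeGroup.of 0, FreeGroup.of 1} : Set (FreeGroup (Fin 2))) =
          Set.range FreeGroup.of := by
        ext z
        simp only [Set.mem_insert_iff, Set.mem_singleton_iff, Set.mem_range]
        constructor
        · rintro (rfl | rfl) <;> exact ⟨_, rfl⟩
        · rintro ⟨i, rfl⟩
          rcases Fin.exists_fin_two.mp ⟨i, rfl⟩ with h | h <;> simp [h]
      rw [hrange, FreeGroup.closure_range_of]
    rw [himg, ← MonoidHom.map_closure, hcl]
    exact Subgroup.map_top_of_surjective _ (QuotientGroup.mk'_surjective _)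
  -- order of v divides p ^ (n - 1)
  have hordv : v ^ (p ^ (n - 1)) = 1 := by
    rw [hv, ← QuotientGroup.mk_pow, QuotientGroup.eq_one_iff]
    exact lam_antitone p (by omega : n ≤ n - 1 + 1)
      (pow_p_pow_mem_lam p (FreeGroup.of 1) (n - 1))
  -- generation by {u v², u v⁴}
  have hgen2 : Subgroup.closure ({u * v ^ 2, u * v ^ 4} : Set Q) = ⊤ := by
    have hx2 : u * v ^ 2 ∈ Subgroup.closure ({u * v ^ 2, u * v ^ 4} : Set Q) :=
      Subgroup.subset_closure (by simp)
    have hy2 : u * v ^ 4 ∈ Subgroup.closure ({u * v ^ 2, u * v ^ 4} : Set Q) :=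
      Subgroup.subset_closure (by simp)
    have hv2 : v ^ 2 ∈ Subgroup.closure ({u * v ^ 2, u * v ^ 4} : Set Q) := by
      have h3 : (u * v ^ 2)⁻¹ * (u * v ^ 4) = v ^ 2 := by group
      have hmem := Subgroup.mul_mem _ (Subgroup.inv_mem _ hx2) hy2
      rwa [h3] at hmem
    have hvmem : v ∈ Subgroup.closure ({u * v ^ 2, u * v ^ 4} : Set Q) := by
      have hodd : 2 * ((p ^ (n - 1) + 1) / 2) = p ^ (n - 1) + 1 := by
        have hoddp : Odd (p ^ (n - 1)) := (hp.odd_of_ne_two (by omega)).pow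
        obtain ⟨m, hm⟩ := hoddp
        omega
      have hveq : (v ^ 2) ^ ((p ^ (n - 1) + 1) / 2) = v := by
        rw [← pow_mul, hodd, pow_succ, hordv, one_mul]
      have hmem := Subgroup.pow_mem _ hv2 ((p ^ (n - 1) + 1) / 2)
      rwa [hveq] at hmem
    have humem : u ∈ Subgroup.closure ({u * v ^ 2, u * v ^ 4} : Set Q) := by
      have h3 : (u * v ^ 2) * (v ^ 2)⁻¹ = u := by group
      have hmem := Subgroup.mul_mem _ hx2 (Subgroup.inv_mem _ hv2)
      rwa [h3] at hmem
    rw [eq_top_iff, ← hgen1, Subgroup.closure_le]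
    rintro z hz
    simp only [Set.mem_insert_iff, Set.mem_singleton_iff] at hz
    rcases hz with rfl | rfl
    · exact humem
    · exact hvmem
  have hstruct : IsBeauvilleStructure u v (u * v ^ 2) (u * v ^ 4) :=
    ⟨hgen1, hgen2, hSigma⟩
  constructor
  · refine ⟨lam_quot_finite p hp n, ?_, u, v, u * v ^ 2, u * v ^ 4, hstruct⟩
    -- nontriviality
    refine ⟨u, 1, ?_⟩
    intro hu1
    rw [hu, QuotientGroup.eq_one_iff] at hu1
    have h2 : FreeGroup.of 0 ∈ lam (G := FreeGroup (Fin 2)) p 2 := lam_antitone p hn hu1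
    have hmem : FreeGroup.of 0 ^ (1 : ℤ) * (FreeGroup.of 0 ^ (0 : ℤ))⁻¹ ∈
        lam (G := FreeGroup (Fin 2)) p (1 + 1) := by simpa using h2
    have hdvd := lam_int_dvd p 1 (FreeGroup.of 0) (FreeGroup.of 0) 1 0 1 0 1 0 1 0
      Aab_of0 Aab_of0 hmem
    simp only [mul_one, mul_zero, add_zero, zero_mul, sub_zero, one_mul, pow_one] at hdvd
    have := Int.le_of_dvd (by norm_num) hdvd
    omega
  · intro _
    exact hstruct
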